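/- Every string S ∈ 𝒮^p_n with n ≥ 1 satisfies δ(S) ≤ 2; in fact, d_k(S) ≤ 2k holds for every k ∈ {1,...,n}. -/

import Mathlib

/-- The set of distinct length-`k` contiguous substrings of `S`. -/
def substrings {α : Type} [DecidableEq α] (S : List α) (k : ℕ) : Finset (List α) :=
  ((Finset.range (S.length + 1)).image (fun i => (S.drop i).take k)).filter
    (fun t => t.length = k)

/-- `d_k(S)`: the number of distinct length-`k` substrings of `S`. -/
def subCount {α : Type} [DecidableEq α] (S : List α) (k : ℕ) : ℕ :=
  (substrings S k).card

/-- The measure `δ(S) = max { d_k(S)/k : 1 ≤ k ≤ |S| }` (with value 0 for the empty string). -/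
def delta {α : Type} [DecidableEq α] (S : List α) : ℚ :=
  if h : S = [] then 0
  else
    (Finset.Icc 1 S.length).sup'
      (Finset.nonempty_Icc.mpr (Nat.one_le_iff_ne_zero.mpr
        (fun h0 => h (List.length_eq_zero_iff.mp h0))))
      (fun k => (subCount S k : ℚ) / k)

/-- `𝒮^p_n`: the family of length-`n` prefixes of infinite strings over `{a, b}`
(`a = false`, `b = true`) in which the first `b` occurs at position 1 and, for each
`j ≥ 2`, the `j`-th `b` occurs at some position in `[2·4^(j-2)+1 .. 4^(j-1)]`
(all positions are 1-based; all other positions hold `a`). -/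
def SPfamily (n : ℕ) : Set (List Bool) :=
  { S | S.length = n ∧ ∃ p : ℕ → ℕ, p 1 = 1 ∧
      (∀ j, 2 ≤ j → 2 * 4 ^ (j - 2) + 1 ≤ p j ∧ p j ≤ 4 ^ (j - 1)) ∧
      ∀ i, i < n → (S.getD i false = true ↔ ∃ j, 1 ≤ j ∧ p j = i + 1) }


section AuxLemmas

lemma SP_allfalse {l : List Bool} (h : l.count true = 0) :
    l = List.replicate l.length false := by
  rw [List.eq_replicate_iff]
  refine ⟨rfl, fun b hb => ?_⟩
  cases b
  · rfl
  · exact absurd (List.count_pos_iff.mpr hb) (by omega)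

lemma SP_inj_aux : ∀ l₁ l₂ : List Bool, l₁.length = l₂.length → l₁.count true ≤ 1 →
    l₂.count true ≤ 1 → l₁.idxOf true = l₂.idxOf true → l₁ = l₂ := by
  intro l₁
  induction l₁ with
  | nil => intro l₂ h _ _ _; exact (List.length_eq_zero_iff.mp h.symm).symm
  | cons a l ih =>
    intro l₂ hlen hc1 hc2 hidx
    cases l₂ with
    | nil => exact absurd hlen (by simp)
    | cons b m =>
      have hne : (false : Bool) ≠ true := by simp
      cases a <;> cases b
      · rw [List.idxOf_cons_ne _ hne, List.idxOf_cons_ne _ hne] at hidx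
        simp only [List.count_cons, List.length_cons] at hlen hc1 hc2
        have := ih m (by omega) (by simpa using hc1) (by simpa using hc2) (by omega)
        rw [this]
      · rw [List.idxOf_cons_ne _ hne, List.idxOf_cons_self] at hidx
        omega
      · rw [List.idxOf_cons_ne _ hne, List.idxOf_cons_self] at hidx
        omega
      · simp only [List.count_cons, List.length_cons] at hc1 hc2 hlen
        have h1 : l.count true = 0 := by simpa using hc1
        have h2 : m.count true = 0 := by simpa using hc2
        have : l.length = m.length := by omega
        rw [SP_allfalse h1, SP_allfalse h2, this]

lemma SP_card_count_le_one (k : ℕ) (s : Finset (List Bool))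
    (hs : ∀ t ∈ s, t.length = k ∧ t.count true ≤ 1) : s.card ≤ k + 1 := by
  have : s.card ≤ (Finset.range (k+1)).card := by
    apply Finset.card_le_card_of_injOn (fun t => t.idxOf true)
    · intro t ht
      rcases hs t ht with ⟨h1, _⟩
      have : t.idxOf true ≤ t.length := List.idxOf_le_length
      simp only [Finset.mem_range, Finset.coe_range, Set.mem_Iio, Finset.mem_coe]
      omega
    · intro t1 h1 t2 h2 heq
      rcases hs t1 h1 with ⟨ha, hb⟩
      rcases hs t2 h2 with ⟨hc, hd⟩
      exact SP_inj_aux t1 t2 (by omega) hb hd heq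
  simpa using this

lemma SP_one_true : ∀ l : List Bool, 1 ≤ l.count true →
    ∃ m, m < l.length ∧ l.getD m false = true := by
  intro l
  induction l with
  | nil => simp
  | cons a t ih =>
    intro h
    cases a
    · have : 1 ≤ t.count true := by simpa using h
      obtain ⟨m, hm, hg⟩ := ih this
      exact ⟨m + 1, by simpa using hm, by simpa using hg⟩
    · exact ⟨0, by simp, by simp⟩

lemma SP_two_true : ∀ l : List Bool, 2 ≤ l.count true →
    ∃ m₁ m₂, m₁ < m₂ ∧ m₂ < l.length ∧ l.getD m₁ false = true ∧ l.getD m₂ false = true := by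
  intro l
  induction l with
  | nil => simp
  | cons a t ih =>
    intro h
    cases a
    · have : 2 ≤ t.count true := by simpa using h
      obtain ⟨m₁, m₂, h1, h2, h3, h4⟩ := ih this
      exact ⟨m₁ + 1, m₂ + 1, by omega, by simpa using h2, by simpa using h3, by simpa using h4⟩
    · have h' : 2 ≤ t.count true + 1 := by simpa using h
      have : 1 ≤ t.count true := by omega
      obtain ⟨m, hm, hg⟩ := SP_one_true t this
      exact ⟨0, m + 1, by omega, by simpa using hm, by simp, by simpa using hg⟩

lemma SP_window_getD (S : List Bool) (i k m : ℕ) (hm : m < k) (hik : i + k ≤ S.length) :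
    ((S.drop i).take k).getD m false = S.getD (i + m) false := by
  have hl : ((S.drop i).take k).length = k := by
    simp only [List.length_take, List.length_drop]
    omega
  have h1 : m < ((S.drop i).take k).length := by omega
  have h2 : i + m < S.length := by omega
  rw [List.getD_eq_getElem _ _ h1, List.getD_eq_getElem _ _ h2,
    List.getElem_take, List.getElem_drop]

/-- the interval of window starts attributed to the `j`-th `b` -/
def SPKset (p : ℕ → ℕ) (k j : ℕ) : Finset ℕ :=
  Finset.Icc (max (p (j + 1) - k) (if j = 1 then 0 else p (j - 1))) (p j - 1)

section Pprops
variable (p : ℕ → ℕ) (hp1 : p 1 = 1)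
  (hpb : ∀ j, 2 ≤ j → 2 * 4 ^ (j - 2) + 1 ≤ p j ∧ p j ≤ 4 ^ (j - 1))

include hp1 hpb

lemma SP_p_ub : ∀ j, 1 ≤ j → p j ≤ 4 ^ (j - 1) := by
  intro j hj
  rcases Nat.lt_or_ge j 2 with h | h
  · interval_cases j
    simp [hp1]
  · exact (hpb j h).2

lemma SP_p_gap : ∀ j, 1 ≤ j → p j + 4 ^ (j - 1) + 1 ≤ p (j + 1) := by
  intro j hj
  rcases Nat.lt_or_ge j 2 with h | h
  · interval_cases j
    have := (hpb 2 le_rfl).1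
    simp at this ⊢
    omega
  · have h1 : p j ≤ 4 ^ (j - 1) := (hpb j h).2
    have h2 : 2 * 4 ^ (j + 1 - 2) + 1 ≤ p (j + 1) := (hpb (j + 1) (by omega)).1
    have he : j + 1 - 2 = j - 1 := by omega
    rw [he] at h2
    omega

lemma SP_p_mono : ∀ a b, 1 ≤ a → a < b → p a < p b := by
  intro a b ha hab
  induction b with
  | zero => omega
  | succ c ih =>
    have hgap := SP_p_gap p hp1 hpb
    have hi : 1 ≤ 4 ^ (c - 1) := Nat.one_le_pow _ _ (by norm_num)
    rcases Nat.lt_or_ge a c with h | h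
    · have h1 := ih h
      have h2 := hgap c (by omega)
      omega
    · have : a = c := by omega
      subst this
      have := hgap a ha
      have hi2 : 1 ≤ 4 ^ (a - 1) := Nat.one_le_pow _ _ (by norm_num)
      omega

lemma SP_p_mono_le : ∀ a b, 1 ≤ a → a ≤ b → p a ≤ p b := by
  intro a b ha hab
  rcases Nat.eq_or_lt_of_le hab with h | h
  · rw [h]
  · exact le_of_lt (SP_p_mono p hp1 hpb a b ha h)

lemma SP_tele : ∀ r, 1 ≤ r → ∑ j ∈ Finset.Icc 2 r, (p j - p (j - 1)) = p r - p 1 := by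
  intro r hr
  induction r with
  | zero => omega
  | succ c ih =>
    rcases Nat.lt_or_ge c 1 with h | h
    · interval_cases c
      simp
    · rw [show c + 1 = (c + 1 - 1) + 1 by omega, Finset.sum_Icc_succ_top (by omega)]
      simp only [Nat.add_sub_cancel]
      rw [ih h]
      have h1 : p 1 ≤ p c := SP_p_mono_le p hp1 hpb 1 c le_rfl h
      have h2 : p c ≤ p (c + 1) := SP_p_mono_le p hp1 hpb c (c + 1) h (by omega)
      omega

lemma SP_Ksum (k : ℕ) (hk : 1 ≤ k) :
    ∑ j ∈ Finset.Icc 1 k, (SPKset p k j).card ≤ k - 1 := by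
  classical
  set P : ℕ → Prop := fun j => 1 ≤ j ∧ (SPKset p k j).Nonempty with hP
  set m := Nat.findGreatest P k with hm
  have hzero : ∀ j ∈ Finset.Icc (m + 1) k, (SPKset p k j).card = 0 := by
    intro j hj
    simp only [Finset.mem_Icc] at hj
    by_contra hne
    have hnon : (SPKset p k j).Nonempty := Finset.card_pos.mp (by omega)
    have : j ≤ m := Nat.le_findGreatest hj.2 ⟨by omega, hnon⟩
    omega
  have hmk : m ≤ k := Nat.findGreatest_le k
  have hsplit : ∑ j ∈ Finset.Icc 1 k, (SPKset p k j).card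
      = ∑ j ∈ Finset.Icc 1 m, (SPKset p k j).card := by
    refine (Finset.sum_subset (Finset.Icc_subset_Icc_right hmk) ?_).symm
    intro x hx hx'
    simp only [Finset.mem_Icc] at hx hx'
    exact hzero x (by simp only [Finset.mem_Icc]; omega)
  rw [hsplit]
  by_cases hw : ∃ j, j ≤ k ∧ P j
  case neg =>
    have : ∀ j ∈ Finset.Icc 1 m, (SPKset p k j).card = 0 := by
      intro j hj
      simp only [Finset.mem_Icc] at hj
      by_contra hne
      exact hw ⟨j, by omega, ⟨hj.1, Finset.card_pos.mp (by omega)⟩⟩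
    rw [Finset.sum_eq_zero this]
    omega
  case pos =>
  obtain ⟨j0, hj0k, hPj0⟩ := hw
  have hPm : P m := Nat.findGreatest_spec hj0k hPj0
  obtain ⟨hm1, hmne⟩ := hPm
  have hne := Finset.nonempty_Icc.mp hmne
  have h32 : 3 ≤ p 2 := by have := (hpb 2 le_rfl).1; norm_num at this; omega
  rcases Nat.lt_or_ge m 2 with hm2 | hm2
  · -- m = 1
    have hm' : m = 1 := by omega
    rw [hm']
    simp only [Finset.Icc_self, Finset.sum_singleton]
    have hk3 : 3 ≤ k := by
      rw [hm'] at hne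
      simp only [show (1:ℕ) + 1 = 2 from rfl, if_pos rfl, hp1] at hne
      have := le_max_left (p 2 - k) 0
      omega
    rw [SPKset, Nat.card_Icc, hp1]
    omega
  · -- m ≥ 2
    have hsplit1 : Finset.Icc 1 m = insert 1 (Finset.Icc 2 m) := by
      ext x
      simp only [Finset.mem_Icc, Finset.mem_insert]
      omega
    rw [hsplit1, Finset.sum_insert (by simp)]
    rw [show m = (m - 1) + 1 by omega, Finset.sum_Icc_succ_top (by omega)]
    rw [show m - 1 + 1 = m by omega]
    have hb1 : (SPKset p k 1).card ≤ 1 := by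
      rw [SPKset, Nat.card_Icc, hp1]
      omega
    have hbmid : ∑ j ∈ Finset.Icc 2 (m - 1), (SPKset p k j).card
        ≤ ∑ j ∈ Finset.Icc 2 (m - 1), (p j - p (j - 1)) := by
      apply Finset.sum_le_sum
      intro j hj
      simp only [Finset.mem_Icc] at hj
      have h1 : 1 ≤ p j := hp1 ▸ SP_p_mono_le p hp1 hpb 1 j le_rfl (by omega)
      rw [SPKset, Nat.card_Icc, if_neg (by omega : ¬ j = 1)]
      have := le_max_right (p (j + 1) - k) (p (j - 1))
      omega
    rw [SP_tele p hp1 hpb (m - 1) (by omega)] at hbmid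
    have hgap := SP_p_gap p hp1 hpb m (by omega)
    have hU2 : p (m - 1) ≤ 4 ^ (m - 1 - 1) := SP_p_ub p hp1 hpb (m - 1) (by omega)
    have hE : 4 ^ (m - 1) = 4 ^ (m - 2) * 4 := by
      rw [show m - 1 = (m - 2) + 1 by omega, pow_succ]
    have hE2 : m - 1 - 1 = m - 2 := by omega
    rw [hE2] at hU2
    have hone : 1 ≤ 4 ^ (m - 2) := Nat.one_le_pow _ _ (by norm_num)
    have h1m : 1 ≤ p m := hp1 ▸ SP_p_mono_le p hp1 hpb 1 m le_rfl (by omega)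
    have hcm : (SPKset p k m).card = p m - 1 + 1 - max (p (m + 1) - k) (p (m - 1)) := by
      rw [SPKset, Nat.card_Icc, if_neg (by omega : ¬ m = 1)]
    have hmax1 := le_max_left (p (m + 1) - k) (p (m - 1))
    have hmax2 := le_max_right (p (m + 1) - k) (p (m - 1))
    rw [if_neg (by omega : ¬ m = 1)] at hne
    omega

lemma SP_index_subset (S : List Bool) (n k : ℕ) (hlen : S.length = n)
    (hiff : ∀ i, i < n → (S.getD i false = true ↔ ∃ j, 1 ≤ j ∧ p j = i + 1))
    (hk : 1 ≤ k) (i : ℕ) (hwl : ((S.drop i).take k).length = k)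
    (hc : 2 ≤ ((S.drop i).take k).count true) :
    ∃ j ∈ Finset.Icc 1 k, i ∈ SPKset p k j := by
  have hik : i + k ≤ n := by
    simp only [List.length_take, List.length_drop, hlen] at hwl
    omega
  obtain ⟨m₁, m₂, h12, h2k, hg1, hg2⟩ := SP_two_true _ hc
  rw [hwl] at h2k
  rw [SP_window_getD S i k m₁ (by omega) (by omega)] at hg1
  rw [SP_window_getD S i k m₂ (by omega) (by omega)] at hg2
  obtain ⟨a, ha1, ha2⟩ := (hiff (i + m₁) (by omega)).mp hg1
  obtain ⟨b, hb1, hb2⟩ := (hiff (i + m₂) (by omega)).mp hg2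
  have hab : a < b := by
    by_contra hab
    have := SP_p_mono_le p hp1 hpb b a hb1 (by omega)
    omega
  have hex : ∃ j, 1 ≤ j ∧ i + 1 ≤ p j := ⟨a, ha1, by omega⟩
  classical
  obtain ⟨j1, ⟨hj1a, hj1b⟩, hj1min⟩ :
      ∃ j, (1 ≤ j ∧ i + 1 ≤ p j) ∧ ∀ j' < j, ¬(1 ≤ j' ∧ i + 1 ≤ p j') :=
    ⟨Nat.find hex, Nat.find_spec hex, fun j' h => Nat.find_min hex h⟩
  have hj1le : j1 ≤ a := by
    by_contra hcon
    exact hj1min a (by omega) ⟨ha1, by omega⟩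
  have hsucc : p (j1 + 1) ≤ i + k := by
    have : p (j1 + 1) ≤ p b := SP_p_mono_le p hp1 hpb (j1 + 1) b (by omega) (by omega)
    omega
  have hgap := SP_p_gap p hp1 hpb j1 hj1a
  have hone : 1 ≤ 4 ^ (j1 - 1) := Nat.one_le_pow _ _ (by norm_num)
  have hjk : j1 ≤ k := by
    have hjp : j1 - 1 < 4 ^ (j1 - 1) := Nat.lt_pow_self (by norm_num)
    omega
  refine ⟨j1, by simp only [Finset.mem_Icc]; omega, ?_⟩
  rw [SPKset, Finset.mem_Icc]
  constructor
  · apply max_le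
    · omega
    · rcases eq_or_ne j1 1 with h | h
      · simp [h]
      · rw [if_neg h]
        have := hj1min (j1 - 1) (by omega)
        push_neg at this
        have := this (by omega)
        omega
  · omega

lemma SP_subCount_le (S : List Bool) (n : ℕ) (hlen : S.length = n)
    (hiff : ∀ i, i < n → (S.getD i false = true ↔ ∃ j, 1 ≤ j ∧ p j = i + 1))
    (k : ℕ) (hk : 1 ≤ k) : subCount S k ≤ 2 * k := by
  classical
  set s := substrings S k with hs
  have hmem : ∀ t ∈ s, t.length = k ∧ ∃ i ∈ Finset.range (S.length + 1),
      (S.drop i).take k = t := by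
    intro t ht
    rw [hs, substrings, Finset.mem_filter, Finset.mem_image] at ht
    obtain ⟨⟨i, hi, hit⟩, hlt⟩ := ht
    exact ⟨hlt, i, hi, hit⟩
  have hpart : s = s.filter (fun t => t.count true ≤ 1)
      ∪ s.filter (fun t => ¬ (t.count true ≤ 1)) :=
    (Finset.filter_union_filter_not_eq _ s).symm
  have hc1 : (s.filter (fun t => t.count true ≤ 1)).card ≤ k + 1 := by
    apply SP_card_count_le_one
    intro t ht
    rw [Finset.mem_filter] at ht
    exact ⟨(hmem t ht.1).1, ht.2⟩
  have hc2 : (s.filter (fun t => ¬ (t.count true ≤ 1))).card ≤ k - 1 := by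
    have hsub : s.filter (fun t => ¬ (t.count true ≤ 1)) ⊆
        Finset.image (fun i => (S.drop i).take k)
          ((Finset.range (S.length + 1)).filter
            (fun i => ((S.drop i).take k).length = k ∧ 2 ≤ ((S.drop i).take k).count true)) := by
      intro t ht
      rw [Finset.mem_filter] at ht
      obtain ⟨hlt, i, hi, hit⟩ := hmem t ht.1
      rw [Finset.mem_image]
      refine ⟨i, ?_, hit⟩
      rw [Finset.mem_filter]
      refine ⟨hi, by rw [hit]; exact hlt, by rw [hit]; omega⟩
    have hsub2 : ((Finset.range (S.length + 1)).filter
        (fun i => ((S.drop i).take k).length = k ∧ 2 ≤ ((S.drop i).take k).count true)) ⊆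
        (Finset.Icc 1 k).biUnion (SPKset p k) := by
      intro i hi
      rw [Finset.mem_filter] at hi
      obtain ⟨j, hj1, hj2⟩ := SP_index_subset p hp1 hpb S n k hlen hiff hk i hi.2.1 hi.2.2
      exact Finset.mem_biUnion.mpr ⟨j, hj1, hj2⟩
    calc (s.filter (fun t => ¬ (t.count true ≤ 1))).card
        ≤ _ := Finset.card_le_card hsub
      _ ≤ _ := Finset.card_image_le
      _ ≤ ((Finset.Icc 1 k).biUnion (SPKset p k)).card := Finset.card_le_card hsub2
      _ ≤ ∑ j ∈ Finset.Icc 1 k, (SPKset p k j).card := Finset.card_biUnion_le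
      _ ≤ k - 1 := SP_Ksum p hp1 hpb k hk
  have h4 : s.card ≤ (k + 1) + (k - 1) := by
    calc s.card = (s.filter (fun t => t.count true ≤ 1)
          ∪ s.filter (fun t => ¬ (t.count true ≤ 1))).card := by rw [← hpart]
      _ ≤ (s.filter (fun t => t.count true ≤ 1)).card
          + (s.filter (fun t => ¬ (t.count true ≤ 1))).card := Finset.card_union_le _ _
      _ ≤ (k + 1) + (k - 1) := Nat.add_le_add hc1 hc2
  have h5 : subCount S k = s.card := rfl
  omega

end Pprops

end AuxLemmas

/-- Every `S ∈ 𝒮^p_n` with `n ≥ 1` satisfies `d_k(S) ≤ 2k` for every `k ∈ {1,...,n}`;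
consequently `δ(S) ≤ 2`. -/
theorem delta_SPfamily_le_two (n : ℕ) (hn : 1 ≤ n) (S : List Bool) (hS : S ∈ SPfamily n) :
    (∀ k ∈ Finset.Icc 1 n, subCount S k ≤ 2 * k) ∧ delta S ≤ 2 := by
  obtain ⟨hlen, p, hp1, hpb, hiff⟩ := hS
  have hpb' : ∀ j, 2 ≤ j → 2 * 4 ^ (j - 2) + 1 ≤ p j ∧ p j ≤ 4 ^ (j - 1) := hpb
  have main : ∀ k, 1 ≤ k → subCount S k ≤ 2 * k := fun k hk =>
    SP_subCount_le p hp1 hpb' S n hlen hiff k hk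
  constructor
  · intro k hk
    rw [Finset.mem_Icc] at hk
    exact main k hk.1
  · have hSne : S ≠ [] := by
      intro h
      rw [h] at hlen
      simp at hlen
      omega
    rw [delta, dif_neg hSne]
    apply Finset.sup'_le
    intro k hk
    rw [Finset.mem_Icc] at hk
    have hk1 : 1 ≤ k := hk.1
    have hb : subCount S k ≤ 2 * k := main k hk1
    have hq : (subCount S k : ℚ) ≤ 2 * (k : ℚ) := by exact_mod_cast hb
    rw [div_le_iff₀ (by positivity : (0:ℚ) < (k:ℚ))]
    linarith
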